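/- Let μ, q, g ∈ ℝ with q ≠ 0, q ≠ −2, 1+q ≠ 0, 3(1+q)² ≠ 1, and β := (μ − (1 − (1+q)²)²)/3 ≠ 0. If A₂ = 0 and C₂ = 0 (the Eckhaus and zigzag boundaries cross), where A₂ := 12β(3(1+q)² − 1) − 16q²(1+q)²(2+q)² and C₂ := 12β(βg(1+q)² + q(2+q)), then 4gq(1+q)⁴(2+q) = −3(3(1+q)² − 1); equivalently g = 3(3(1+q)² − 1)/(−4q(1+q)⁴(2+q)), which is positive for small q < 0. -/

import Mathlib

/-- Where the Eckhaus boundary (`A₂ = 0`) and the zigzag boundary (`C₂ = 0`)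
cross, the mean-flow coupling satisfies `4gq(1+q)⁴(2+q) = −3(3(1+q)²−1)`,
i.e. `g = 3(3(1+q)²−1)/(−4q(1+q)⁴(2+q))`. -/
theorem eckhaus_zigzag_crossing (μ q g β A₂ C₂ : ℝ)
    (hq0 : q ≠ 0) (hq2 : q ≠ -2) (hq1 : 1 + q ≠ 0) (hq3 : 3*(1 + q)^2 ≠ 1)
    (hβ : β = (μ - (1 - (1 + q)^2)^2) / 3) (hβne : β ≠ 0)
    (hA : A₂ = 12*β*(3*(1 + q)^2 - 1) - 16*q^2*(1 + q)^2*(2 + q)^2)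
    (hC : C₂ = 12*β*(β*g*(1 + q)^2 + q*(2 + q)))
    (hA0 : A₂ = 0) (hC0 : C₂ = 0) :
    4*g*q*(1 + q)^4*(2 + q) = -3*(3*(1 + q)^2 - 1) ∧
    g = 3*(3*(1 + q)^2 - 1) / (-4*q*(1 + q)^4*(2 + q)) := by
  have hq2' : 2 + q ≠ 0 := fun h => hq2 (by linarith)
  have h1 : β*g*(1 + q)^2 + q*(2 + q) = 0 := by
    have h12 : (12:ℝ)*β ≠ 0 := by positivity
    have := hC0; rw [hC] at this
    exact (mul_eq_zero.mp (by linarith [this])).resolve_left h12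
  have h2 : 12*β*(3*(1 + q)^2 - 1) = 16*q^2*(1 + q)^2*(2 + q)^2 := by
    rw [hA] at hA0; linarith
  have h3 : 16*g*q^2*(1 + q)^4*(2 + q)^2 + 12*q*(2 + q)*(3*(1 + q)^2 - 1) = 0 := by
    linear_combination (12*(3*(1 + q)^2 - 1))*h1 - g*(1 + q)^2*h2
  have key : 4*g*q*(1 + q)^4*(2 + q) = -3*(3*(1 + q)^2 - 1) := by
    have hmul : (4*q*(2 + q)) ≠ 0 := by
      simp [hq0, hq2']
    apply mul_left_cancel₀ hmul
    ring_nf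
    linear_combination h3
  refine ⟨key, ?_⟩
  have hden : -4*q*(1 + q)^4*(2 + q) ≠ 0 := by
    simp [hq0, hq1, hq2']
  field_simp
  linear_combination key
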